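/- Fix T ≥ 1 and B > 1. Let P be a probability distribution with finite support contained in (0,1], and define the prior-independent objective Φ(s) := Σ_{p ∈ supp(P)} P(p) · E_p[cost(s,X)] / OPT*(p) over adapted stopping rules s. Then there exists an adapted stopping rule s minimizing Φ over all adapted stopping rules which (i) never stops on a bad-weather day (s(X) ≤ T implies X_{s(X)} = 1), and (ii) is information-symmetric: for every day i ∈ {1,…,T} and all inputs X, Y with s(X) ≥ i and s(Y) ≥ i, if Σ_{j<i} X_j = Σ_{j<i} Y_j and X_i = Y_i, then s(X) = i if and only if s(Y) = i (the stop/continue decision at day i depends only on the number of good days among the first i−1 days and the weather on day i). -/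
import Mathlib


open Finset

/-- An adapted stopping rule for horizon `T`: it takes values in `{1,…,T+1}` and its value is
determined by the coordinates `1,…,min(s(X),T)` of the input. -/
def Adapted (T : ℕ) (s : (Fin T → Bool) → ℕ) : Prop :=
  (∀ X, 1 ≤ s X ∧ s X ≤ T + 1) ∧
  ∀ X Y : Fin T → Bool, (∀ i : Fin T, (i : ℕ) < min (s X) T → X i = Y i) → s Y = s X

/-- Cost of the stopping rule `s` on input `X`: rent (cost 1) on each good-weather day strictly
before the stopping day, plus the stopping cost `B` if it stops by day `T`. -/
noncomputable def cost (T : ℕ) (B : ℝ) (s : (Fin T → Bool) → ℕ) (X : Fin T → Bool) : ℝ :=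
  (∑ i : Fin T, if (i : ℕ) + 1 < s X ∧ X i = true then (1 : ℝ) else 0)
    + (if s X ≤ T then B else 0)

/-- Number of good-weather days in input `X`. -/
def good (T : ℕ) (X : Fin T → Bool) : ℕ := (Finset.univ.filter fun i => X i = true).card

/-- Expectation over the i.i.d. Bernoulli(p) distribution on inputs. -/
noncomputable def Ep (T : ℕ) (p : ℝ) (f : (Fin T → Bool) → ℝ) : ℝ :=
  ∑ X : Fin T → Bool, p ^ good T X * (1 - p) ^ (T - good T X) * f X

/-- The offline (hindsight) optimum on input `X`. -/
noncomputable def OPTX (T : ℕ) (B : ℝ) (X : Fin T → Bool) : ℝ := min (good T X : ℝ) B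

/-- Number of good-weather days among the first `i` days (1-indexed) of input `X`. -/
def goodCount (T : ℕ) (X : Fin T → Bool) (i : ℕ) : ℕ :=
  (Finset.univ.filter fun j : Fin T => (j : ℕ) < i ∧ X j = true).card

/-- The Bayesian optimal cost: the least expected cost over adapted stopping rules. -/
noncomputable def OPTstar (T : ℕ) (B p : ℝ) : ℝ :=
  sInf { v : ℝ | ∃ s : (Fin T → Bool) → ℕ, Adapted T s ∧ v = Ep T p (cost T B s) }

/-! ### auxiliary development -/

/-- shift of a measure-weight function -/
def sh (m : ℕ → ℝ) : ℕ → ℝ := fun k => m (k + 1)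

/-- total mass of `r` remaining days with `k` goods so far. -/
def AA (m : ℕ → ℝ) : ℕ → ℕ → ℝ
  | 0, k => m k
  | r + 1, k => AA m r k + AA m r (k + 1)

/-- DP value function. -/
noncomputable def VV (m : ℕ → ℝ) (B : ℝ) : ℕ → ℕ → ℝ
  | 0, _ => 0
  | r + 1, k => VV m B r k + min (B * AA m r (k + 1)) (AA m r (k + 1) + VV m B r (k + 1))

/-- stop decision on a good day with `r` days remaining after today and `k` goods before today. -/
def stopP (m : ℕ → ℝ) (B : ℝ) (r k : ℕ) : Prop :=
  B * AA m r (k + 1) ≤ AA m r (k + 1) + VV m B r (k + 1)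

def StopAt (m : ℕ → ℝ) (B : ℝ) (T : ℕ) (X : Fin T → Bool) (i : ℕ) : Prop :=
  ∃ h : i < T, X ⟨i, h⟩ = true ∧ stopP m B (T - 1 - i) (goodCount T X i)

open Classical in
noncomputable def ruleOf (m : ℕ → ℝ) (B : ℝ) (T : ℕ) (X : Fin T → Bool) : ℕ :=
  if h : ∃ i, StopAt m B T X i then Nat.find h + 1 else T + 1

noncomputable def FF (T : ℕ) (m : ℕ → ℝ) (B : ℝ) (s : (Fin T → Bool) → ℕ) : ℝ :=
  ∑ X : Fin T → Bool, m (good T X) * cost T B s X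

lemma AA_sh (m : ℕ → ℝ) (r k : ℕ) : AA (sh m) r k = AA m r (k + 1) := by
  induction r generalizing k with
  | zero => rfl
  | succ r ih => simp [AA, ih]

lemma VV_sh (m : ℕ → ℝ) (B : ℝ) (r k : ℕ) : VV (sh m) B r k = VV m B r (k + 1) := by
  induction r generalizing k with
  | zero => rfl
  | succ r ih => simp [VV, ih, AA_sh]

lemma stopP_sh (m : ℕ → ℝ) (B : ℝ) (r k : ℕ) : stopP (sh m) B r k ↔ stopP m B r (k + 1) := by
  simp [stopP, AA_sh, VV_sh]

lemma AA_nonneg {m : ℕ → ℝ} (hm : ∀ k, 0 ≤ m k) (r k : ℕ) : 0 ≤ AA m r k := by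
  induction r generalizing k with
  | zero => exact hm k
  | succ r ih => exact add_nonneg (ih k) (ih (k + 1))

lemma VV_le {m : ℕ → ℝ} {B : ℝ} (hm : ∀ k, 0 ≤ m k) (hB : 0 ≤ B) (r k : ℕ) :
    VV m B r k ≤ B * AA m r k := by
  induction r generalizing k with
  | zero => simpa [VV, AA] using mul_nonneg hB (hm k)
  | succ r ih =>
      have h1 := ih k
      have h2 : min (B * AA m r (k + 1)) (AA m r (k + 1) + VV m B r (k + 1)) ≤ B * AA m r (k + 1) :=
        min_le_left _ _
      calc VV m B (r + 1) k ≤ B * AA m r k + B * AA m r (k + 1) := add_le_add h1 h2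
        _ = B * AA m (r + 1) k := by rw [AA]; ring

lemma sum_cons_split {T : ℕ} (g : (Fin (T + 1) → Bool) → ℝ) :
    ∑ X : Fin (T + 1) → Bool, g X
      = (∑ Y : Fin T → Bool, g (Fin.cons false Y)) + ∑ Y : Fin T → Bool, g (Fin.cons true Y) := by
  rw [← Equiv.sum_comp (Fin.consEquiv (fun _ => Bool)) g, Fintype.sum_prod_type]
  rw [Fintype.sum_bool]
  simp [Fin.consEquiv, add_comm]

lemma good_cons {T : ℕ} (b : Bool) (Y : Fin T → Bool) :
    good (T + 1) (Fin.cons b Y) = (if b = true then 1 else 0) + good T Y := by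
  simp only [good, Finset.card_filter, Fin.sum_univ_succ, Fin.cons_zero, Fin.cons_succ]

lemma goodCount_zero {T : ℕ} (X : Fin T → Bool) : goodCount T X 0 = 0 := by
  simp [goodCount]

lemma goodCount_cons_succ {T : ℕ} (b : Bool) (Y : Fin T → Bool) (j : ℕ) :
    goodCount (T + 1) (Fin.cons b Y) (j + 1) = (if b = true then 1 else 0) + goodCount T Y j := by
  simp only [goodCount, Finset.card_filter, Fin.sum_univ_succ, Fin.cons_zero, Fin.cons_succ]
  have h0 : (if (0 : ℕ) < j + 1 ∧ b = true then 1 else 0) = (if b = true then 1 else 0) := by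
    by_cases hb : b = true <;> simp [hb]
  have h1 : ∀ i : Fin T, (if ((i.succ : ℕ)) < j + 1 ∧ Y i = true then 1 else 0)
      = (if (i : ℕ) < j ∧ Y i = true then 1 else 0) := by
    intro i
    have : ((i.succ : ℕ)) < j + 1 ↔ (i : ℕ) < j := by simp [Fin.val_succ]
    simp [this]
  rw [Finset.sum_congr rfl (fun i _ => h1 i)]
  by_cases hb : b = true <;> simp [hb]

lemma sum_m_good (m : ℕ → ℝ) (T k : ℕ) :
    ∑ Y : Fin T → Bool, m (k + good T Y) = AA m T k := by
  induction T generalizing m k with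
  | zero =>
      have : ∀ Y : Fin 0 → Bool, good 0 Y = 0 := fun Y => by simp [good]
      simp [this, AA]
  | succ T ih =>
      rw [sum_cons_split (fun X => m (k + good (T + 1) X))]
      simp only [good_cons, if_true, if_neg (by decide : ¬ (false = true))]
      rw [AA]
      congr 1
      · simpa using ih m k
      · rw [← ih m (k + 1)]
        apply Finset.sum_congr rfl
        intro Y _
        congr 1
        omega
attribute [local instance] Classical.propDecidable

section Part2
variable {m : ℕ → ℝ} {B : ℝ} {T : ℕ}

lemma ruleOf_pos (X : Fin T → Bool) : 1 ≤ ruleOf m B T X := by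
  unfold ruleOf; split <;> omega

lemma ruleOf_le (X : Fin T → Bool) : ruleOf m B T X ≤ T + 1 := by
  unfold ruleOf; split
  · next h => have := (Nat.find_spec h).1; omega
  · omega

lemma ruleOf_eq_succ_iff {X : Fin T → Bool} {i : ℕ} (hi : i < T) :
    ruleOf m B T X = i + 1 ↔ StopAt m B T X i ∧ ∀ j < i, ¬ StopAt m B T X j := by
  classical
  unfold ruleOf; split
  · next h =>
      constructor
      · intro he
        have : Nat.find h = i := by omega
        rw [Nat.find_eq_iff] at this
        exact this
      · intro hr
        have : Nat.find h = i := (Nat.find_eq_iff h).2 hr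
        omega
  · next h =>
      push_neg at h
      constructor
      · intro he; omega
      · intro hr; exact absurd hr.1 (h i)

lemma ruleOf_eq_iff_of_le {X : Fin T → Bool} {i : ℕ} (hi : i < T)
    (hle : i + 1 ≤ ruleOf m B T X) :
    ruleOf m B T X = i + 1 ↔ StopAt m B T X i := by
  constructor
  · intro he; exact ((ruleOf_eq_succ_iff hi).1 he).1
  · intro hs
    rw [ruleOf_eq_succ_iff hi]
    refine ⟨hs, fun j hj hsj => ?_⟩
    have hex : ∃ k, StopAt m B T X k := ⟨j, hsj⟩
    have h1 : ruleOf m B T X = Nat.find hex + 1 := by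
      unfold ruleOf; rw [dif_pos hex]
    have h2 : Nat.find hex ≤ j := Nat.find_min' hex hsj
    omega

lemma goodCount_congr {X Y : Fin T → Bool} {i : ℕ}
    (h : ∀ j : Fin T, (j : ℕ) < i → X j = Y j) : goodCount T X i = goodCount T Y i := by
  unfold goodCount
  congr 1
  apply Finset.filter_congr
  intro j _
  constructor
  · rintro ⟨hj, hx⟩; exact ⟨hj, (h j hj) ▸ hx⟩
  · rintro ⟨hj, hy⟩; exact ⟨hj, (h j hj) ▸ hy⟩

lemma StopAt_congr {X Y : Fin T → Bool} {i : ℕ}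
    (h : ∀ j : Fin T, (j : ℕ) ≤ i → X j = Y j) :
    StopAt m B T X i ↔ StopAt m B T Y i := by
  unfold StopAt
  constructor
  · rintro ⟨hi, hx, hp⟩
    refine ⟨hi, ?_, ?_⟩
    · rw [← h ⟨i, hi⟩ le_rfl]; exact hx
    · rwa [goodCount_congr (fun j hj => (h j (le_of_lt hj)).symm)]
  · rintro ⟨hi, hx, hp⟩
    refine ⟨hi, ?_, ?_⟩
    · rw [h ⟨i, hi⟩ le_rfl]; exact hx
    · rwa [goodCount_congr (fun j hj => h j (le_of_lt hj))]

lemma ruleOf_adapted : Adapted T (ruleOf m B T) := by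
  classical
  constructor
  · exact fun X => ⟨ruleOf_pos X, ruleOf_le X⟩
  · intro X Y hagree
    by_cases hex : ∃ i, StopAt m B T X i
    · have hX : ruleOf m B T X = Nat.find hex + 1 := by unfold ruleOf; rw [dif_pos hex]
      set f := Nat.find hex with hf
      have hfT : f < T := (Nat.find_spec hex).1
      have hmin : min (ruleOf m B T X) T = f + 1 := by rw [hX]; omega
      have hag : ∀ j : Fin T, (j : ℕ) ≤ f → X j = Y j := by
        intro j hj; apply hagree; omega
      have htrans : ∀ k ≤ f, (StopAt m B T X k ↔ StopAt m B T Y k) := by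
        intro k hk
        exact StopAt_congr (fun j hj => hag j (le_trans hj hk))
      have hYk : StopAt m B T Y f := (htrans f le_rfl).1 (Nat.find_spec hex)
      have : ruleOf m B T Y = f + 1 := by
        rw [ruleOf_eq_succ_iff hfT]
        exact ⟨hYk, fun j hj hsj =>
          Nat.find_min hex hj ((htrans j (le_of_lt hj)).2 hsj)⟩
      rw [this, hX]
    · have hX : ruleOf m B T X = T + 1 := by unfold ruleOf; rw [dif_neg hex]
      have : X = Y := by
        funext j
        apply hagree
        rw [hX]; omega
      rw [← this]
end Part2
section Part3
variable {m : ℕ → ℝ} {B : ℝ} {T : ℕ}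

lemma cost_cons_stop {s : (Fin (T + 1) → Bool) → ℕ} {b : Bool} {Y : Fin T → Bool}
    (h : s (Fin.cons b Y) = 1) : cost (T + 1) B s (Fin.cons b Y) = B := by
  unfold cost
  rw [h]
  have h1 : ∀ i : Fin (T + 1), ¬ ((i : ℕ) + 1 < 1 ∧ (Fin.cons b Y : Fin (T+1) → Bool) i = true) := by
    intro i hc; omega
  simp only [if_neg (h1 _)]
  simp

lemma cost_cons_cont {s : (Fin (T + 1) → Bool) → ℕ} {s' : (Fin T → Bool) → ℕ} {b : Bool}
    {Y : Fin T → Bool} (h : s (Fin.cons b Y) = s' Y + 1) (h1 : 1 ≤ s' Y) :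
    cost (T + 1) B s (Fin.cons b Y) = (if b = true then (1 : ℝ) else 0) + cost T B s' Y := by
  unfold cost
  rw [h, Fin.sum_univ_succ]
  simp only [Fin.cons_succ, Fin.cons_zero, Fin.val_succ, Fin.val_zero]
  have e0 : (0 + 1 < s' Y + 1 ∧ b = true) ↔ (b = true) :=
    ⟨And.right, fun hb => ⟨by omega, hb⟩⟩
  rw [if_congr e0 rfl rfl]
  have e1 : ∀ i : Fin T, (if (i : ℕ) + 1 + 1 < s' Y + 1 ∧ Y i = true then (1:ℝ) else 0)
      = (if (i : ℕ) + 1 < s' Y ∧ Y i = true then (1:ℝ) else 0) := by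
    intro i
    have hiff : (i : ℕ) + 1 + 1 < s' Y + 1 ↔ (i : ℕ) + 1 < s' Y := by omega
    rw [if_congr (and_congr_left' hiff) rfl rfl]
  rw [Finset.sum_congr rfl fun i _ => e1 i]
  have e2 : (s' Y + 1 ≤ T + 1) ↔ (s' Y ≤ T) := by omega
  rw [if_congr e2 rfl rfl]
  ring

lemma stop_head {s : (Fin (T + 1) → Bool) → ℕ} (hs : Adapted (T + 1) s) {b : Bool}
    {Y0 : Fin T → Bool} (h : s (Fin.cons b Y0) = 1) (Y : Fin T → Bool) :
    s (Fin.cons b Y) = 1 := by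
  have hagree : ∀ i : Fin (T + 1),
      (i : ℕ) < min (s (Fin.cons b Y0)) (T + 1) →
        (Fin.cons b Y0 : Fin (T+1) → Bool) i = (Fin.cons b Y : Fin (T+1) → Bool) i := by
    intro i hi
    rw [h] at hi
    have h0 : i = 0 := by
      apply Fin.ext
      rw [Fin.val_zero]
      omega
    rw [h0, Fin.cons_zero, Fin.cons_zero]
  have := hs.2 (Fin.cons b Y0) (Fin.cons b Y) hagree
  omega

lemma adapted_tail {s : (Fin (T + 1) → Bool) → ℕ} (hs : Adapted (T + 1) s) {b : Bool}
    (hne : ∀ Y, s (Fin.cons b Y) ≠ 1) :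
    Adapted T (fun Y => s (Fin.cons b Y) - 1) ∧
      ∀ Y, s (Fin.cons b Y) = (s (Fin.cons b Y) - 1) + 1 := by
  have h2 : ∀ Y, 2 ≤ s (Fin.cons b Y) := by
    intro Y
    have := (hs.1 (Fin.cons b Y)).1
    have := hne Y
    omega
  constructor
  · constructor
    · intro Y
      have hb1 := h2 Y
      have hb2 := (hs.1 (Fin.cons b Y)).2
      refine ⟨?_, ?_⟩
      · show 1 ≤ s (Fin.cons b Y) - 1
        omega
      · show s (Fin.cons b Y) - 1 ≤ T + 1
        omega
    · intro Y Y' hagree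
      have key : s (Fin.cons b Y') = s (Fin.cons b Y) := by
        apply hs.2
        intro i hi
        rcases Fin.eq_zero_or_eq_succ i with h0 | ⟨j, hj⟩
        · rw [h0, Fin.cons_zero, Fin.cons_zero]
        · rw [hj, Fin.cons_succ, Fin.cons_succ]
          apply hagree
          rw [hj] at hi
          have hvs : ((j.succ : Fin (T + 1)) : ℕ) = (j : ℕ) + 1 := by simp [Fin.val_succ]
          rw [hvs] at hi
          have hsy := h2 Y
          show (j : ℕ) < min (s (Fin.cons b Y) - 1) T
          omega
      show s (Fin.cons b Y') - 1 = s (Fin.cons b Y) - 1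
      omega
  · intro Y
    have := h2 Y
    omega

lemma StopAt_cons_zero {b : Bool} {Y : Fin T → Bool} :
    StopAt m B (T + 1) (Fin.cons b Y) 0 ↔ (b = true ∧ stopP m B T 0) := by
  unfold StopAt
  constructor
  · rintro ⟨h, hx, hp⟩
    refine ⟨hx, ?_⟩
    rwa [goodCount_zero] at hp
  · rintro ⟨hb, hp⟩
    refine ⟨Nat.succ_pos T, ?_, ?_⟩
    · exact hb
    · rwa [goodCount_zero]

lemma StopAt_cons_succ_false {Y : Fin T → Bool} {j : ℕ} :
    StopAt m B (T + 1) (Fin.cons false Y) (j + 1) ↔ StopAt m B T Y j := by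
  unfold StopAt
  have hr : T + 1 - 1 - (j + 1) = T - 1 - j := by omega
  constructor
  · rintro ⟨h, hx, hp⟩
    have hj : j < T := by omega
    have hfin : (⟨j + 1, h⟩ : Fin (T + 1)) = (⟨j, hj⟩ : Fin T).succ :=
      Fin.ext (by simp [Fin.val_succ])
    refine ⟨hj, ?_, ?_⟩
    · rw [hfin, Fin.cons_succ] at hx; exact hx
    · rw [goodCount_cons_succ, hr] at hp
      simpa using hp
  · rintro ⟨hj, hx, hp⟩
    have h : j + 1 < T + 1 := by omega
    have hfin : (⟨j + 1, h⟩ : Fin (T + 1)) = (⟨j, hj⟩ : Fin T).succ :=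
      Fin.ext (by simp [Fin.val_succ])
    refine ⟨h, ?_, ?_⟩
    · rw [hfin, Fin.cons_succ]; exact hx
    · rw [goodCount_cons_succ, hr]
      simpa using hp

lemma StopAt_cons_succ_true {Y : Fin T → Bool} {j : ℕ} :
    StopAt m B (T + 1) (Fin.cons true Y) (j + 1) ↔ StopAt (sh m) B T Y j := by
  unfold StopAt
  have hr : T + 1 - 1 - (j + 1) = T - 1 - j := by omega
  constructor
  · rintro ⟨h, hx, hp⟩
    have hj : j < T := by omega
    have hfin : (⟨j + 1, h⟩ : Fin (T + 1)) = (⟨j, hj⟩ : Fin T).succ :=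
      Fin.ext (by simp [Fin.val_succ])
    refine ⟨hj, ?_, ?_⟩
    · rw [hfin, Fin.cons_succ] at hx; exact hx
    · rw [goodCount_cons_succ, hr] at hp
      rw [stopP_sh]
      have : (if (true : Bool) = true then 1 else 0) + goodCount T Y j
          = goodCount T Y j + 1 := by simp [Nat.add_comm]
      rwa [this] at hp
  · rintro ⟨hj, hx, hp⟩
    have h : j + 1 < T + 1 := by omega
    have hfin : (⟨j + 1, h⟩ : Fin (T + 1)) = (⟨j, hj⟩ : Fin T).succ :=
      Fin.ext (by simp [Fin.val_succ])
    refine ⟨h, ?_, ?_⟩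
    · rw [hfin, Fin.cons_succ]; exact hx
    · rw [goodCount_cons_succ, hr]
      rw [stopP_sh] at hp
      have : (if (true : Bool) = true then 1 else 0) + goodCount T Y j
          = goodCount T Y j + 1 := by simp [Nat.add_comm]
      rwa [this]

lemma StopAt_cons_succ {b : Bool} {Y : Fin T → Bool} {j : ℕ} :
    StopAt m B (T + 1) (Fin.cons b Y) (j + 1) ↔
      StopAt (if b = true then sh m else m) B T Y j := by
  cases b with
  | false =>
      rw [if_neg (by decide : ¬ ((false : Bool) = true))]
      exact StopAt_cons_succ_false
  | true =>
      rw [if_pos rfl]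
      exact StopAt_cons_succ_true

lemma ruleOf_cons (b : Bool) (Y : Fin T → Bool) :
    ruleOf m B (T + 1) (Fin.cons b Y) =
      if b = true ∧ stopP m B T 0 then 1
      else ruleOf (if b = true then sh m else m) B T Y + 1 := by
  set m' := if b = true then sh m else m with hm'
  by_cases hhead : b = true ∧ stopP m B T 0
  · rw [if_pos hhead]
    have h0 : StopAt m B (T + 1) (Fin.cons b Y) 0 := StopAt_cons_zero.2 hhead
    have hex : ∃ i, StopAt m B (T + 1) (Fin.cons b Y) i := ⟨0, h0⟩
    have h1 : ruleOf m B (T + 1) (Fin.cons b Y) = Nat.find hex + 1 := by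
      unfold ruleOf; rw [dif_pos hex]
    have hf : Nat.find hex = 0 := by
      rw [Nat.find_eq_iff]; exact ⟨h0, by omega⟩
    omega
  · rw [if_neg hhead]
    have h0 : ¬ StopAt m B (T + 1) (Fin.cons b Y) 0 := fun hc => hhead (StopAt_cons_zero.1 hc)
    by_cases hex' : ∃ j, StopAt m' B T Y j
    · have hf' := Nat.find_spec hex'
      have hex : ∃ i, StopAt m B (T + 1) (Fin.cons b Y) i :=
        ⟨Nat.find hex' + 1, StopAt_cons_succ.2 hf'⟩
      have h1 : ruleOf m B (T + 1) (Fin.cons b Y) = Nat.find hex + 1 := by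
        unfold ruleOf; rw [dif_pos hex]
      have h2 : ruleOf m' B T Y = Nat.find hex' + 1 := by
        unfold ruleOf; rw [dif_pos hex']
      have hff : Nat.find hex = Nat.find hex' + 1 := by
        rw [Nat.find_eq_iff]
        refine ⟨StopAt_cons_succ.2 hf', ?_⟩
        intro n hn hc
        cases n with
        | zero => exact h0 hc
        | succ k =>
            exact Nat.find_min hex' (by omega) (StopAt_cons_succ.1 hc)
      omega
    · have hex : ¬ ∃ i, StopAt m B (T + 1) (Fin.cons b Y) i := by
        rintro ⟨i, hi⟩
        cases i with
        | zero => exact h0 hi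
        | succ k => exact hex' ⟨k, StopAt_cons_succ.1 hi⟩
      have h1 : ruleOf m B (T + 1) (Fin.cons b Y) = T + 1 + 1 := by
        unfold ruleOf; rw [dif_neg hex]
      have h2 : ruleOf m' B T Y = T + 1 := by
        unfold ruleOf; rw [dif_neg hex']
      omega
end Part3
section Part4

lemma cost_zero_adapted {B : ℝ} {s : (Fin 0 → Bool) → ℕ} (hs : Adapted 0 s)
    (X : Fin 0 → Bool) : cost 0 B s X = 0 := by
  unfold cost
  have h1 := (hs.1 X).1
  rw [if_neg (by omega)]
  simp

lemma lower_bound (B : ℝ) (hB : 0 ≤ B) :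
    ∀ T (m : ℕ → ℝ), (∀ k, 0 ≤ m k) → ∀ s, Adapted T s → VV m B T 0 ≤ FF T m B s := by
  intro T
  induction T with
  | zero =>
      intro m hm s hs
      have hc : ∀ X : Fin 0 → Bool, cost 0 B s X = 0 := cost_zero_adapted hs
      simp [FF, VV, hc]
  | succ T ih =>
      intro m hm s hs
      rw [FF, sum_cons_split (fun X => m (good (T + 1) X) * cost (T + 1) B s X)]
      -- false branch
      have hfalse : VV m B T 0 ≤
          ∑ Y : Fin T → Bool, m (good (T + 1) (Fin.cons false Y)) * cost (T + 1) B s (Fin.cons false Y) := by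
        by_cases hstop : ∃ Y0, s (Fin.cons false Y0) = 1
        · obtain ⟨Y0, hY0⟩ := hstop
          have hall : ∀ Y, s (Fin.cons false Y) = 1 := stop_head hs hY0
          have heq : ∑ Y : Fin T → Bool, m (good (T + 1) (Fin.cons false Y)) * cost (T + 1) B s (Fin.cons false Y)
              = B * AA m T 0 := by
            have : ∀ Y : Fin T → Bool, m (good (T + 1) (Fin.cons false Y)) * cost (T + 1) B s (Fin.cons false Y)
                = m (0 + good T Y) * B := by
              intro Y
              rw [good_cons, cost_cons_stop (hall Y)]
              norm_num
            rw [Finset.sum_congr rfl fun Y _ => this Y, ← Finset.sum_mul, sum_m_good, mul_comm]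
          rw [heq]
          calc VV m B T 0 ≤ B * AA m T 0 := VV_le hm hB T 0
            _ = B * AA m T 0 := rfl
        · push_neg at hstop
          obtain ⟨htail, heq2⟩ := adapted_tail hs hstop
          have h1 : ∀ Y, 1 ≤ s (Fin.cons false Y) - 1 := fun Y => (htail.1 Y).1
          have hsum : ∑ Y : Fin T → Bool, m (good (T + 1) (Fin.cons false Y)) * cost (T + 1) B s (Fin.cons false Y)
              = FF T m B (fun Y => s (Fin.cons false Y) - 1) := by
            rw [FF]
            apply Finset.sum_congr rfl
            intro Y _
            rw [good_cons, cost_cons_cont (s' := fun Y => s (Fin.cons false Y) - 1) (heq2 Y) (h1 Y)]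
            norm_num
          rw [hsum]
          exact ih m hm _ htail
      -- true branch
      have htrue : min (B * AA m T 1) (AA m T 1 + VV m B T 1) ≤
          ∑ Y : Fin T → Bool, m (good (T + 1) (Fin.cons true Y)) * cost (T + 1) B s (Fin.cons true Y) := by
        by_cases hstop : ∃ Y0, s (Fin.cons true Y0) = 1
        · obtain ⟨Y0, hY0⟩ := hstop
          have hall : ∀ Y, s (Fin.cons true Y) = 1 := stop_head hs hY0
          have heq : ∑ Y : Fin T → Bool, m (good (T + 1) (Fin.cons true Y)) * cost (T + 1) B s (Fin.cons true Y)
              = B * AA m T 1 := by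
            have : ∀ Y : Fin T → Bool, m (good (T + 1) (Fin.cons true Y)) * cost (T + 1) B s (Fin.cons true Y)
                = m (1 + good T Y) * B := by
              intro Y
              rw [good_cons, cost_cons_stop (hall Y)]
              norm_num
            rw [Finset.sum_congr rfl fun Y _ => this Y, ← Finset.sum_mul, sum_m_good, mul_comm]
          rw [heq]
          exact min_le_left _ _
        · push_neg at hstop
          obtain ⟨htail, heq2⟩ := adapted_tail hs hstop
          have h1 : ∀ Y, 1 ≤ s (Fin.cons true Y) - 1 := fun Y => (htail.1 Y).1
          have hsum : ∑ Y : Fin T → Bool, m (good (T + 1) (Fin.cons true Y)) * cost (T + 1) B s (Fin.cons true Y)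
              = AA m T 1 + FF T (sh m) B (fun Y => s (Fin.cons true Y) - 1) := by
            have hterm : ∀ Y : Fin T → Bool,
                m (good (T + 1) (Fin.cons true Y)) * cost (T + 1) B s (Fin.cons true Y)
                = m (1 + good T Y) + sh m (good T Y) * cost T B (fun Y => s (Fin.cons true Y) - 1) Y := by
              intro Y
              rw [good_cons, cost_cons_cont (s' := fun Y => s (Fin.cons true Y) - 1) (heq2 Y) (h1 Y)]
              have hshm : sh m (good T Y) = m (1 + good T Y) := by
                unfold sh; rw [Nat.add_comm]
              rw [hshm]
              norm_num
              ring
            rw [Finset.sum_congr rfl fun Y _ => hterm Y, Finset.sum_add_distrib, sum_m_good, FF]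
          rw [hsum]
          have hIH : VV (sh m) B T 0 ≤ FF T (sh m) B (fun Y => s (Fin.cons true Y) - 1) :=
            ih (sh m) (fun k => hm (k + 1)) _ htail
          rw [VV_sh] at hIH
          calc min (B * AA m T 1) (AA m T 1 + VV m B T 1) ≤ AA m T 1 + VV m B T 1 := min_le_right _ _
            _ ≤ AA m T 1 + FF T (sh m) B (fun Y => s (Fin.cons true Y) - 1) := by linarith
      have hVV : VV m B (T + 1) 0 = VV m B T 0 + min (B * AA m T 1) (AA m T 1 + VV m B T 1) := by
        simp [VV]
      rw [hVV]
      exact add_le_add hfalse htrue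

lemma upper_bound (B : ℝ) :
    ∀ T (m : ℕ → ℝ), (∀ k, 0 ≤ m k) → FF T m B (ruleOf m B T) ≤ VV m B T 0 := by
  intro T
  induction T with
  | zero =>
      intro m hm
      have hc : ∀ X : Fin 0 → Bool, cost 0 B (ruleOf m B 0) X = 0 :=
        cost_zero_adapted ruleOf_adapted
      simp [FF, VV, hc]
  | succ T ih =>
      intro m hm
      set s := ruleOf m B (T + 1) with hsdef
      rw [FF, sum_cons_split (fun X => m (good (T + 1) X) * cost (T + 1) B s X)]
      have hconsf : ∀ Y : Fin T → Bool, s (Fin.cons false Y) = ruleOf m B T Y + 1 := by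
        intro Y
        rw [hsdef, ruleOf_cons]
        simp
      have hfalse : ∑ Y : Fin T → Bool, m (good (T + 1) (Fin.cons false Y)) * cost (T + 1) B s (Fin.cons false Y)
          ≤ VV m B T 0 := by
        have hsum : ∑ Y : Fin T → Bool, m (good (T + 1) (Fin.cons false Y)) * cost (T + 1) B s (Fin.cons false Y)
            = FF T m B (ruleOf m B T) := by
          rw [FF]
          apply Finset.sum_congr rfl
          intro Y _
          rw [good_cons, cost_cons_cont (hconsf Y) (ruleOf_pos Y)]
          norm_num
        rw [hsum]
        exact ih m hm
      have htrue : ∑ Y : Fin T → Bool, m (good (T + 1) (Fin.cons true Y)) * cost (T + 1) B s (Fin.cons true Y)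
          ≤ min (B * AA m T 1) (AA m T 1 + VV m B T 1) := by
        by_cases hstop : stopP m B T 0
        · have hcons : ∀ Y : Fin T → Bool, s (Fin.cons true Y) = 1 := by
            intro Y
            rw [hsdef, ruleOf_cons, if_pos ⟨rfl, hstop⟩]
          have hsum : ∑ Y : Fin T → Bool, m (good (T + 1) (Fin.cons true Y)) * cost (T + 1) B s (Fin.cons true Y)
              = B * AA m T 1 := by
            have : ∀ Y : Fin T → Bool, m (good (T + 1) (Fin.cons true Y)) * cost (T + 1) B s (Fin.cons true Y)
                = m (1 + good T Y) * B := by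
              intro Y
              rw [good_cons, cost_cons_stop (hcons Y)]
              norm_num
            rw [Finset.sum_congr rfl fun Y _ => this Y, ← Finset.sum_mul, sum_m_good, mul_comm]
          rw [hsum]
          have hle : B * AA m T 1 ≤ AA m T 1 + VV m B T 1 := hstop
          rw [min_eq_left hle]
        · have hcons : ∀ Y : Fin T → Bool, s (Fin.cons true Y) = ruleOf (sh m) B T Y + 1 := by
            intro Y
            rw [hsdef, ruleOf_cons, if_neg (fun hc => hstop hc.2)]
            simp
          have hsum : ∑ Y : Fin T → Bool, m (good (T + 1) (Fin.cons true Y)) * cost (T + 1) B s (Fin.cons true Y)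
              = AA m T 1 + FF T (sh m) B (ruleOf (sh m) B T) := by
            have hterm : ∀ Y : Fin T → Bool,
                m (good (T + 1) (Fin.cons true Y)) * cost (T + 1) B s (Fin.cons true Y)
                = m (1 + good T Y) + sh m (good T Y) * cost T B (ruleOf (sh m) B T) Y := by
              intro Y
              rw [good_cons, cost_cons_cont (hcons Y) (ruleOf_pos Y)]
              have hshm : sh m (good T Y) = m (1 + good T Y) := by
                unfold sh; rw [Nat.add_comm]
              rw [hshm]
              norm_num
              ring
            rw [Finset.sum_congr rfl fun Y _ => hterm Y, Finset.sum_add_distrib, sum_m_good, FF]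
          rw [hsum]
          have hIH : FF T (sh m) B (ruleOf (sh m) B T) ≤ VV (sh m) B T 0 :=
            ih (sh m) (fun k => hm (k + 1))
          rw [VV_sh] at hIH
          have hle : AA m T 1 + VV m B T 1 ≤ B * AA m T 1 := le_of_lt (lt_of_not_ge hstop)
          rw [min_eq_right hle]
          linarith
      have hVV : VV m B (T + 1) 0 = VV m B T 0 + min (B * AA m T 1) (AA m T 1 + VV m B T 1) := by
        simp [VV]
      rw [hVV]
      exact add_le_add hfalse htrue
end Part4
section Part5

lemma cost_nonneg {T : ℕ} {B : ℝ} (hB : 0 ≤ B) (s : (Fin T → Bool) → ℕ) (X : Fin T → Bool) :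
    0 ≤ cost T B s X := by
  unfold cost
  apply add_nonneg
  · apply Finset.sum_nonneg
    intro i _
    split <;> norm_num
  · split <;> norm_num [hB]

lemma adapted_const (T : ℕ) : Adapted T (fun _ => T + 1) :=
  ⟨fun _ => ⟨Nat.succ_le_succ (Nat.zero_le T), le_rfl⟩, fun _ _ _ => rfl⟩

lemma Ep_ge {T : ℕ} (hT : 1 ≤ T) {B p : ℝ} (hB : 1 < B) (hp : 0 < p) (hp1 : p ≤ 1)
    {s : (Fin T → Bool) → ℕ} (hs : Adapted T s) : p ^ T ≤ Ep T p (cost T B s) := by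
  have hB0 : (0 : ℝ) ≤ B := by linarith
  set X1 : Fin T → Bool := fun _ => true with hX1
  have hgood : good T X1 = T := by
    simp [good, hX1, Finset.card_univ]
  have hcost : (1 : ℝ) ≤ cost T B s X1 := by
    by_cases hsx : s X1 ≤ T
    · unfold cost
      rw [if_pos hsx]
      have : (0:ℝ) ≤ ∑ i : Fin T, if (i : ℕ) + 1 < s X1 ∧ X1 i = true then (1:ℝ) else 0 := by
        apply Finset.sum_nonneg; intro i _; split <;> norm_num
      linarith
    · have hsx' : s X1 = T + 1 := by
        have := (hs.1 X1).2; omega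
      unfold cost
      rw [if_neg hsx, hsx']
      have hterm : ∀ i : Fin T, (if (i : ℕ) + 1 < T + 1 ∧ X1 i = true then (1:ℝ) else 0) = 1 := by
        intro i
        rw [if_pos ⟨by omega, rfl⟩]
      rw [Finset.sum_congr rfl fun i _ => hterm i]
      rw [Finset.sum_const, Finset.card_univ]
      simp
      have : (1 : ℝ) ≤ (T : ℝ) := by exact_mod_cast hT
      linarith
  have hterm_nonneg : ∀ X : Fin T → Bool,
      0 ≤ p ^ good T X * (1 - p) ^ (T - good T X) * cost T B s X := by
    intro X
    apply mul_nonneg (mul_nonneg (pow_nonneg (le_of_lt hp) _) (pow_nonneg (by linarith) _))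
    exact cost_nonneg hB0 s X
  have hsingle : p ^ good T X1 * (1 - p) ^ (T - good T X1) * cost T B s X1
      ≤ Ep T p (cost T B s) := by
    rw [Ep]
    exact Finset.single_le_sum (fun X _ => hterm_nonneg X) (Finset.mem_univ X1)
  have : p ^ T ≤ p ^ good T X1 * (1 - p) ^ (T - good T X1) * cost T B s X1 := by
    rw [hgood, Nat.sub_self, pow_zero]
    have hpT : (0:ℝ) < p ^ T := pow_pos hp T
    nlinarith
  linarith

lemma OPTstar_pos {T : ℕ} (hT : 1 ≤ T) {B p : ℝ} (hB : 1 < B) (hp : 0 < p) (hp1 : p ≤ 1) :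
    0 < OPTstar T B p := by
  have hne : (Ep T p (cost T B (fun _ => T + 1))) ∈
      { v : ℝ | ∃ s : (Fin T → Bool) → ℕ, Adapted T s ∧ v = Ep T p (cost T B s) } :=
    ⟨fun _ => T + 1, adapted_const T, rfl⟩
  have hlb : ∀ v ∈ { v : ℝ | ∃ s : (Fin T → Bool) → ℕ, Adapted T s ∧ v = Ep T p (cost T B s) },
      p ^ T ≤ v := by
    rintro v ⟨s, hs, rfl⟩
    exact Ep_ge hT hB hp hp1 hs
  have : p ^ T ≤ OPTstar T B p := le_csInf ⟨_, hne⟩ hlb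
  have hpT : (0:ℝ) < p ^ T := pow_pos hp T
  linarith

end Part5


/-- For any finitely supported prior `P` on `(0,1]`, there is an adapted
stopping rule minimizing the prior-independent objective
`Φ(s) = Σ_p P(p)·E_p[cost(s)]/OPT*(p)` over all adapted stopping rules which never stops on a
bad-weather day and is information-symmetric: its stop/continue decision on day `i` depends
only on the number of good days among the first `i−1` days and the weather on day `i`. -/
theorem exists_info_symmetric_optimal_rule
    (T : ℕ) (hT : 1 ≤ T) (B : ℝ) (hB : 1 < B)
    (P : ℝ →₀ ℝ) (hP0 : ∀ p, 0 ≤ P p) (hP1 : (P.sum fun _ w => w) = 1)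
    (hPsupp : ∀ p ∈ P.support, p ∈ Set.Ioc (0 : ℝ) 1) :
    ∃ s : (Fin T → Bool) → ℕ, Adapted T s ∧
      -- s minimizes the prior-independent objective over all adapted stopping rules:
      (∀ s' : (Fin T → Bool) → ℕ, Adapted T s' →
        (P.sum fun p w => w * (Ep T p (cost T B s) / OPTstar T B p))
          ≤ P.sum fun p w => w * (Ep T p (cost T B s') / OPTstar T B p)) ∧
      -- s never stops on a bad-weather day:
      (∀ X, s X ≤ T → ∀ i : Fin T, (i : ℕ) + 1 = s X → X i = true) ∧
      -- s is information-symmetric: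
      (∀ i : Fin T, ∀ X Y : Fin T → Bool,
        (i : ℕ) + 1 ≤ s X → (i : ℕ) + 1 ≤ s Y →
        goodCount T X (i : ℕ) = goodCount T Y (i : ℕ) → X i = Y i →
        (s X = (i : ℕ) + 1 ↔ s Y = (i : ℕ) + 1)) := by
  set m : ℕ → ℝ := fun k =>
    ∑ p ∈ P.support, (P p / OPTstar T B p) * (p ^ k * (1 - p) ^ (T - k)) with hmdef
  have hm : ∀ k, 0 ≤ m k := by
    intro k
    apply Finset.sum_nonneg
    intro p hp
    obtain ⟨hp0, hp1⟩ := hPsupp p hp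
    apply mul_nonneg
    · exact div_nonneg (hP0 p) (le_of_lt (OPTstar_pos hT hB hp0 hp1))
    · exact mul_nonneg (pow_nonneg (le_of_lt hp0) _) (pow_nonneg (by linarith) _)
  have hΦ : ∀ s : (Fin T → Bool) → ℕ,
      (P.sum fun p w => w * (Ep T p (cost T B s) / OPTstar T B p)) = FF T m B s := by
    intro s
    rw [Finsupp.sum, FF]
    calc ∑ p ∈ P.support, P p * (Ep T p (cost T B s) / OPTstar T B p)
        = ∑ p ∈ P.support, ∑ X : Fin T → Bool,
            (P p / OPTstar T B p) * (p ^ good T X * (1 - p) ^ (T - good T X)) * cost T B s X := by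
          apply Finset.sum_congr rfl
          intro p _
          rw [Ep, Finset.sum_div, Finset.mul_sum]
          apply Finset.sum_congr rfl
          intro X _
          ring
      _ = ∑ X : Fin T → Bool, ∑ p ∈ P.support,
            (P p / OPTstar T B p) * (p ^ good T X * (1 - p) ^ (T - good T X)) * cost T B s X :=
          Finset.sum_comm
      _ = ∑ X : Fin T → Bool, m (good T X) * cost T B s X := by
          apply Finset.sum_congr rfl
          intro X _
          rw [hmdef, Finset.sum_mul]
  refine ⟨ruleOf m B T, ruleOf_adapted, ?_, ?_, ?_⟩
  · intro s' hs'
    rw [hΦ, hΦ]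
    exact le_trans (upper_bound B T m hm) (lower_bound B (by linarith) T m hm s' hs')
  · intro X hle i hi
    have hex : ∃ j, StopAt m B T X j := by
      by_contra hno
      have : ruleOf m B T X = T + 1 := by unfold ruleOf; rw [dif_neg hno]
      omega
    have hval : ruleOf m B T X = Nat.find hex + 1 := by unfold ruleOf; rw [dif_pos hex]
    have hfi : Nat.find hex = (i : ℕ) := by omega
    have hsp := Nat.find_spec hex
    rw [hfi] at hsp
    obtain ⟨hlt, hx, _⟩ := hsp
    have he : (⟨(i : ℕ), hlt⟩ : Fin T) = i := Fin.ext rfl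
    rwa [he] at hx
  · intro i X Y hX hY hgc hXY
    rw [ruleOf_eq_iff_of_le i.isLt hX, ruleOf_eq_iff_of_le i.isLt hY]
    unfold StopAt
    constructor
    · rintro ⟨h, hx, hp⟩
      refine ⟨i.isLt, ?_, ?_⟩
      · have e1 : (⟨(i : ℕ), h⟩ : Fin T) = i := Fin.ext rfl
        have e2 : (⟨(i : ℕ), i.isLt⟩ : Fin T) = i := Fin.ext rfl
        rw [e2, ← hXY]
        rw [e1] at hx
        exact hx
      · rwa [hgc] at hp
    · rintro ⟨h, hx, hp⟩
      refine ⟨i.isLt, ?_, ?_⟩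
      · have e1 : (⟨(i : ℕ), h⟩ : Fin T) = i := Fin.ext rfl
        have e2 : (⟨(i : ℕ), i.isLt⟩ : Fin T) = i := Fin.ext rfl
        rw [e2, hXY]
        rw [e1] at hx
        exact hx
      · rwa [← hgc] at hp
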